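/- arXiv:1507.08024 — 6 statements merged into one kernel-verified Lean document; each statement's English description precedes it below -/
import Mathlib

section
/- For every w ∈ W, the double coset W_H·w·W_J contains at least one element of D_{H,J}. -/
noncomputable section

open scoped RealInnerProductSpace

variable (V : Type*) [NormedAddCommGroup V] [InnerProductSpace ℝ V] [FiniteDimensional ℝ V]

/-- The reflection in the hyperplane orthogonal to `α`. -/
def rsRefl (α : V) : V ≃ₗᵢ[ℝ] V := Submodule.reflection (ℝ ∙ α)ᗮ

variable {V}

/-- The subgroup of `O(V)` generated by the reflections in the elements of `RS`. -/
def weylGroupOf (RS : Set V) : Subgroup (V ≃ₗᵢ[ℝ] V) := Subgroup.closure (rsRefl V '' RS)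

variable (V)

/-- Data of a finite (possibly non-reduced) root system in `V` together with a positive
system cut out by a linear functional. -/
structure RootSystemData where
  R : Set V
  finR : R.Finite
  zero_notMem : (0 : V) ∉ R
  posFun : V →ₗ[ℝ] ℝ
  posFun_ne : ∀ α ∈ R, posFun α ≠ 0
  reflect_mem : ∀ α ∈ R, ∀ β ∈ R, rsRefl V α β ∈ R

namespace RootSystemData

variable {V}
variable (S : RootSystemData V)

/-- The positive roots `R⁺`. -/
def pos : Set V := {α ∈ S.R | 0 < S.posFun α}

/-- The negative roots `R⁻ = −R⁺`. -/
def neg : Set V := {α | -α ∈ S.pos}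

/-- The simple roots of the positive system `RS ∩ R⁺` of a subsystem `RS`, i.e. its
indecomposable elements. -/
def simpleOf (RS : Set V) : Set V :=
  {α ∈ RS ∩ S.pos | ¬ ∃ β ∈ RS ∩ S.pos, ∃ γ ∈ RS ∩ S.pos, α = β + γ}

/-- The set `Δ` of simple roots of `R⁺`. -/
def simple : Set V := S.simpleOf S.R

/-- The Weyl group `W`. -/
def W : Subgroup (V ≃ₗᵢ[ℝ] V) := weylGroupOf S.R

/-- `D_H := {w ∈ W : w⁻¹(Δ_H) ⊆ R⁺}`. -/
def DH (RH : Set V) : Set (V ≃ₗᵢ[ℝ] V) :=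
  {w | w ∈ S.W ∧ ∀ α ∈ S.simpleOf RH, w⁻¹ α ∈ S.pos}

/-- The standard parabolic subsystem `R_J := R ∩ span J`. -/
def RJ (J : Set V) : Set V := S.R ∩ (Submodule.span ℝ J : Set V)

/-- `D_J := {w ∈ W : w⁻¹(J) ⊆ R⁺}`. -/
def DJ (J : Set V) : Set (V ≃ₗᵢ[ℝ] V) := {w | w ∈ S.W ∧ ∀ α ∈ J, w⁻¹ α ∈ S.pos}

/-- `D_{H,J} := {w ∈ W : w(J) ⊆ R⁺ and w⁻¹(Δ_H) ⊆ R⁺}`. -/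
def DHJ (RH J : Set V) : Set (V ≃ₗᵢ[ℝ] V) :=
  {w | w ∈ S.W ∧ (∀ α ∈ J, w α ∈ S.pos) ∧ ∀ α ∈ S.simpleOf RH, w⁻¹ α ∈ S.pos}

/-- The subsystem `R_{M′(w)} := R_H ∩ w(R_J)`. -/
def RMprime (RH J : Set V) (w : V ≃ₗᵢ[ℝ] V) : Set V := RH ∩ (⇑w '' S.RJ J)

/-- `D_{M′(w)} := {x ∈ W : x⁻¹(Δ_{M′(w)}) ⊆ R⁺}`. -/
def DMprime (RH J : Set V) (w : V ≃ₗᵢ[ℝ] V) : Set (V ≃ₗᵢ[ℝ] V) :=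
  {x | x ∈ S.W ∧ ∀ α ∈ S.simpleOf (S.RMprime RH J w), x⁻¹ α ∈ S.pos}

/-- `l_H(x) := #{α ∈ R_H⁺ : x(α) ∈ R⁻}`. -/
def lH (RH : Set V) (x : V ≃ₗᵢ[ℝ] V) : ℕ :=
  Set.ncard {α | α ∈ RH ∩ S.pos ∧ x α ∈ S.neg}

end RootSystemData

/-- `a_J := {v ∈ V : ⟨α, v⟩ = 0 for all α ∈ J}`. -/
def aJset {V : Type*} [NormedAddCommGroup V] [InnerProductSpace ℝ V] (J : Set V) : Set V :=
  {v | ∀ α ∈ J, ⟪α, v⟫ = (0 : ℝ)}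

section AuxLemmas

set_option linter.unusedSectionVars false

open Set

variable {V : Type*} [NormedAddCommGroup V] [InnerProductSpace ℝ V] [FiniteDimensional ℝ V]

lemma rsRefl_apply_self (γ : V) : rsRefl V γ γ = -γ :=
  Submodule.reflection_orthogonalComplement_singleton_eq_neg γ

lemma rsRefl_symm (γ : V) : (rsRefl V γ).symm = rsRefl V γ := Submodule.reflection_symm

lemma rsRefl_inv (γ : V) : (rsRefl V γ)⁻¹ = rsRefl V γ := by
  rw [show (rsRefl V γ)⁻¹ = (rsRefl V γ).symm from rfl, rsRefl_symm]

lemma rsRefl_rsRefl (γ δ : V) : rsRefl V γ (rsRefl V γ δ) = δ := by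
  conv_lhs => rw [← rsRefl_symm γ]
  exact (rsRefl V γ).symm_apply_apply δ

lemma sub_rsRefl_mem_span (γ δ : V) : δ - rsRefl V γ δ ∈ (ℝ ∙ γ) := by
  have h1 : δ - rsRefl V γ δ = (2 : ℝ) • (δ - (Submodule.starProjection (ℝ ∙ γ)ᗮ δ : V)) := by
    rw [rsRefl, Submodule.reflection_apply]
    rw [two_smul, two_smul]
    abel
  rw [h1]
  have h2 : δ - (Submodule.starProjection (ℝ ∙ γ)ᗮ δ : V) ∈ ((ℝ ∙ γ)ᗮ)ᗮ :=
    Submodule.sub_starProjection_mem_orthogonal δ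
  rw [Submodule.orthogonal_orthogonal] at h2
  exact Submodule.smul_mem _ _ h2

namespace RootSystemData

variable (S : RootSystemData V)

lemma neg_mem_R {α : V} (hα : α ∈ S.R) : -α ∈ S.R := by
  have := S.reflect_mem α hα α hα
  rwa [rsRefl_apply_self] at this

lemma pos_subset_R : S.pos ⊆ S.R := fun _ h => h.1

lemma posFun_pos_of_mem {α : V} (h : α ∈ S.pos) : 0 < S.posFun α := h.2

lemma mem_neg_iff {α : V} : α ∈ S.neg ↔ -α ∈ S.pos := Iff.rfl

lemma posFun_neg_of_mem {α : V} (h : α ∈ S.neg) : S.posFun α < 0 := by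
  have : 0 < S.posFun (-α) := h.2
  rw [map_neg] at this; linarith

lemma mem_pos_of_posFun {α : V} (hα : α ∈ S.R) (h : 0 < S.posFun α) : α ∈ S.pos := ⟨hα, h⟩

lemma mem_neg_of_posFun {α : V} (hα : α ∈ S.R) (h : S.posFun α < 0) : α ∈ S.neg := by
  refine ⟨S.neg_mem_R hα, ?_⟩
  rw [map_neg]; linarith

lemma pos_or_neg {α : V} (hα : α ∈ S.R) : α ∈ S.pos ∨ α ∈ S.neg := by
  rcases lt_or_gt_of_ne (S.posFun_ne α hα) with h | h
  · exact Or.inr (S.mem_neg_of_posFun hα h)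
  · exact Or.inl (S.mem_pos_of_posFun hα h)

lemma not_pos_and_neg {α : V} (h1 : α ∈ S.pos) (h2 : α ∈ S.neg) : False := by
  have := S.posFun_pos_of_mem h1
  have := S.posFun_neg_of_mem h2
  linarith

/-- Elements of the Weyl group preserve the root set (in both directions). -/
lemma W_maps {g : V ≃ₗᵢ[ℝ] V} (hg : g ∈ S.W) :
    (∀ α ∈ S.R, g α ∈ S.R) ∧ (∀ α ∈ S.R, g⁻¹ α ∈ S.R) := by
  refine Subgroup.closure_induction
    (p := fun g _ => (∀ α ∈ S.R, g α ∈ S.R) ∧ (∀ α ∈ S.R, g⁻¹ α ∈ S.R)) ?_ ?_ ?_ ?_ hg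
  · rintro x ⟨ρ, hρ, rfl⟩
    constructor
    · exact fun α hα => S.reflect_mem ρ hρ α hα
    · intro α hα
      rw [rsRefl_inv]
      exact S.reflect_mem ρ hρ α hα
  · exact ⟨fun α hα => hα, fun α hα => hα⟩
  · rintro x y _ _ ⟨hx1, hx2⟩ ⟨hy1, hy2⟩
    refine ⟨fun α hα => ?_, fun α hα => ?_⟩
    · exact hx1 _ (hy1 _ hα)
    · rw [mul_inv_rev]
      exact hy2 _ (hx2 _ hα)
  · rintro x _ ⟨hx1, hx2⟩
    exact ⟨hx2, by simpa using hx1⟩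

/-- Key descent lemma: if `γ` is a positive root sent to a negative root by `x`,
then right-multiplying by the reflection `s_γ` strictly decreases the inversion count. -/
lemma descent (x : V ≃ₗᵢ[ℝ] V) (hx : ∀ α ∈ S.R, x α ∈ S.R)
    {γ : V} (hγR : γ ∈ S.R) (hγp : γ ∈ S.pos) (hxγ : x γ ∈ S.neg) :
    S.lH S.R (x * rsRefl V γ) < S.lH S.R x := by
  classical
  set A : Set V := {δ | δ ∈ S.R ∩ S.pos ∧ (x * rsRefl V γ) δ ∈ S.neg} with hA
  set B : Set V := {δ | δ ∈ S.R ∩ S.pos ∧ x δ ∈ S.neg} with hB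
  have hBfin : B.Finite := S.finR.subset (fun δ hδ => hδ.1.1)
  have hγB : γ ∈ B := ⟨⟨hγR, hγp⟩, hxγ⟩
  set f : V → V := fun δ => if rsRefl V γ δ ∈ S.pos then rsRefl V γ δ else δ with hf
  have hsR : ∀ δ ∈ S.R, rsRefl V γ δ ∈ S.R := fun δ hδ => S.reflect_mem γ hγR δ hδ
  have hmul : ∀ δ : V, (x * rsRefl V γ) δ = x (rsRefl V γ δ) := fun δ => rfl
  -- for δ ∈ A with s δ ∉ pos, we get δ ∈ B and δ ≠ γ.
  have key : ∀ δ ∈ A, rsRefl V γ δ ∉ S.pos → δ ∈ B ∧ δ ≠ γ := by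
    intro δ hδA hsp
    obtain ⟨⟨hδR, hδp⟩, hδneg⟩ := hδA
    rw [hmul] at hδneg
    have hsδR : rsRefl V γ δ ∈ S.R := hsR δ hδR
    have hsδn : rsRefl V γ δ ∈ S.neg := (S.pos_or_neg hsδR).resolve_left hsp
    obtain ⟨c, hc⟩ := Submodule.mem_span_singleton.mp (sub_rsRefl_mem_span γ δ)
    have hδeq : δ = rsRefl V γ δ + c • γ := sub_eq_iff_eq_add'.mp hc.symm
    have h4 : S.posFun δ = S.posFun (rsRefl V γ δ) + c * S.posFun γ := by
      conv_lhs => rw [hδeq]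
      rw [map_add, map_smul, smul_eq_mul]
    have hcpos : 0 < c := by
      have h1 : 0 < S.posFun δ := S.posFun_pos_of_mem hδp
      have h2 : S.posFun (rsRefl V γ δ) < 0 := S.posFun_neg_of_mem hsδn
      have h3 : 0 < S.posFun γ := S.posFun_pos_of_mem hγp
      nlinarith
    have hxδ : x δ = x (rsRefl V γ δ) + c • x γ := by
      conv_lhs => rw [hδeq]
      rw [map_add, map_smul]
    have hxδR : x δ ∈ S.R := hx δ hδR
    have hxδneg : S.posFun (x δ) < 0 := by
      have h1 : S.posFun (x (rsRefl V γ δ)) < 0 := S.posFun_neg_of_mem hδneg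
      have h2 : S.posFun (x γ) < 0 := S.posFun_neg_of_mem hxγ
      have h5 : S.posFun (x δ) = S.posFun (x (rsRefl V γ δ)) + c * S.posFun (x γ) := by
        rw [hxδ, map_add, map_smul, smul_eq_mul]
      nlinarith
    refine ⟨⟨⟨hδR, hδp⟩, S.mem_neg_of_posFun hxδR hxδneg⟩, ?_⟩
    rintro rfl
    rw [rsRefl_apply_self, map_neg] at hδneg
    have hxp : x δ ∈ S.pos := by
      have h6 : -(-(x δ)) ∈ S.pos := (S.mem_neg_iff).mp hδneg
      rwa [neg_neg] at h6
    exact S.not_pos_and_neg hxp hxγ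
  have hmaps : ∀ δ ∈ A, f δ ∈ B \ {γ} := by
    intro δ hδA
    by_cases hsp : rsRefl V γ δ ∈ S.pos
    · obtain ⟨⟨hδR, hδp⟩, hδneg⟩ := hδA
      rw [hmul] at hδneg
      have hsδR : rsRefl V γ δ ∈ S.R := hsR δ hδR
      constructor
      · simp only [hf, if_pos hsp]
        exact ⟨⟨hsδR, hsp⟩, hδneg⟩
      · simp only [hf, if_pos hsp, Set.mem_singleton_iff]
        intro heq
        have hδeq2 : δ = -γ := by
          have := congrArg (rsRefl V γ) heq
          rwa [rsRefl_rsRefl, rsRefl_apply_self] at this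
        have hδp2 := S.posFun_pos_of_mem hδp
        have hγp2 := S.posFun_pos_of_mem hγp
        rw [hδeq2, map_neg] at hδp2
        linarith
    · obtain ⟨hB', hne⟩ := key δ hδA hsp
      simp only [hf, if_neg hsp]
      exact ⟨hB', hne⟩
  have hinj : Set.InjOn f A := by
    intro δ₁ h₁ δ₂ h₂ heq
    by_cases p₁ : rsRefl V γ δ₁ ∈ S.pos <;> by_cases p₂ : rsRefl V γ δ₂ ∈ S.pos
    · simp only [hf, if_pos p₁, if_pos p₂] at heq
      exact (rsRefl V γ).injective heq
    · simp only [hf, if_pos p₁, if_neg p₂] at heq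
      exfalso
      have hδ2 : rsRefl V γ δ₂ = δ₁ := by rw [← heq, rsRefl_rsRefl]
      have hδ₁pos : δ₁ ∈ S.pos := h₁.1.2
      have hsδ₂R : rsRefl V γ δ₂ ∈ S.R := hsR δ₂ h₂.1.1
      have hsδ₂neg : rsRefl V γ δ₂ ∈ S.neg := (S.pos_or_neg hsδ₂R).resolve_left p₂
      rw [hδ2] at hsδ₂neg
      exact S.not_pos_and_neg hδ₁pos hsδ₂neg
    · simp only [hf, if_neg p₁, if_pos p₂] at heq
      exfalso
      have hδ1 : rsRefl V γ δ₁ = δ₂ := by rw [heq, rsRefl_rsRefl]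
      have hδ₂pos : δ₂ ∈ S.pos := h₂.1.2
      have hsδ₁R : rsRefl V γ δ₁ ∈ S.R := hsR δ₁ h₁.1.1
      have hsδ₁neg : rsRefl V γ δ₁ ∈ S.neg := (S.pos_or_neg hsδ₁R).resolve_left p₁
      rw [hδ1] at hsδ₁neg
      exact S.not_pos_and_neg hδ₂pos hsδ₁neg
    · simpa only [hf, if_neg p₁, if_neg p₂] using heq
  have h1 : A.ncard ≤ (B \ {γ}).ncard :=
    Set.ncard_le_ncard_of_injOn f hmaps hinj (hBfin.subset Set.diff_subset)
  have h2 : (B \ {γ}).ncard < B.ncard :=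
    Set.ncard_diff_singleton_lt_of_mem hγB hBfin
  have hAeq : S.lH S.R (x * rsRefl V γ) = A.ncard := rfl
  have hBeq : S.lH S.R x = B.ncard := rfl
  rw [hAeq, hBeq]
  exact lt_of_le_of_lt h1 h2

/-- The inversion count of `x⁻¹` equals that of `x`. -/
lemma lH_inv (x : V ≃ₗᵢ[ℝ] V) (hx : ∀ α ∈ S.R, x α ∈ S.R) (hx' : ∀ α ∈ S.R, x⁻¹ α ∈ S.R) :
    S.lH S.R x⁻¹ = S.lH S.R x := by
  have himg : {δ | δ ∈ S.R ∩ S.pos ∧ x⁻¹ δ ∈ S.neg}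
      = (fun δ => -(x δ)) '' {δ | δ ∈ S.R ∩ S.pos ∧ x δ ∈ S.neg} := by
    ext ε
    constructor
    · rintro ⟨hεRp, hεn⟩
      have hδpos : -(x⁻¹ ε) ∈ S.pos := (S.mem_neg_iff).mp hεn
      have hδR : -(x⁻¹ ε) ∈ S.R := S.pos_subset_R hδpos
      have hxδ : x (-(x⁻¹ ε)) = -ε := by
        rw [map_neg]
        exact congrArg Neg.neg (x.apply_symm_apply ε)
      refine ⟨-(x⁻¹ ε), ⟨⟨hδR, hδpos⟩, ?_⟩, ?_⟩
      · rw [hxδ]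
        refine (S.mem_neg_iff).mpr ?_
        rw [neg_neg]
        exact hεRp.2
      · show -(x (-(x⁻¹ ε))) = ε
        rw [hxδ, neg_neg]
    · rintro ⟨δ, ⟨hδRp, hδn⟩, rfl⟩
      have h1 : -(x δ) ∈ S.pos := (S.mem_neg_iff).mp hδn
      have h2 : x⁻¹ (-(x δ)) = -δ := by
        rw [map_neg]
        exact congrArg Neg.neg (x.symm_apply_apply δ)
      refine ⟨⟨S.pos_subset_R h1, h1⟩, ?_⟩
      rw [h2]
      refine (S.mem_neg_iff).mpr ?_
      rw [neg_neg]
      exact hδRp.2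
  show {δ | δ ∈ S.R ∩ S.pos ∧ x⁻¹ δ ∈ S.neg}.ncard
      = {δ | δ ∈ S.R ∩ S.pos ∧ x δ ∈ S.neg}.ncard
  rw [himg]
  exact Set.ncard_image_of_injective _ (neg_injective.comp x.injective)

end RootSystemData

end AuxLemmas

/-- every double coset `W_H·w·W_J` contains at least one element of `D_{H,J}`. -/
theorem statement1
    (V : Type*) [NormedAddCommGroup V] [InnerProductSpace ℝ V] [FiniteDimensional ℝ V]
    (S : RootSystemData V) (RH : Set V)
    (hRHsub : RH ⊆ S.R) (hRHrefl : ∀ α ∈ RH, ∀ β ∈ RH, rsRefl V α β ∈ RH)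
    (J : Set V) (hJ : J ⊆ S.simple) :
    ∀ w ∈ S.W, ∃ d ∈ S.DHJ RH J,
      ∃ h ∈ weylGroupOf RH, ∃ u ∈ weylGroupOf J, d = h * w * u := by
  classical
  intro w hw
  -- J is contained in R ∩ pos
  have hJRp : ∀ α ∈ J, α ∈ S.R ∧ α ∈ S.pos := by
    intro α hα
    have := hJ hα
    exact ⟨this.1.1, this.1.2⟩
  -- subgroup inclusions
  have hWH : weylGroupOf RH ≤ S.W :=
    Subgroup.closure_mono (Set.image_mono hRHsub)
  have hWJ : weylGroupOf J ≤ S.W :=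
    Subgroup.closure_mono (Set.image_mono (fun α hα => (hJRp α hα).1))
  -- the double coset
  set T : Set (V ≃ₗᵢ[ℝ] V) :=
    {d | ∃ h ∈ weylGroupOf RH, ∃ u ∈ weylGroupOf J, d = h * w * u} with hT
  have hwT : w ∈ T := ⟨1, one_mem _, 1, one_mem _, by group⟩
  have hTW : ∀ d ∈ T, d ∈ S.W := by
    rintro d ⟨h, hh, u, hu, rfl⟩
    exact mul_mem (mul_mem (hWH hh) hw) (hWJ hu)
  -- pick a minimizer of the inversion count over T
  have hPex : ∃ n : ℕ, ∃ d ∈ T, S.lH S.R d = n := ⟨_, w, hwT, rfl⟩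
  set n₀ := Nat.find hPex with hn₀
  obtain ⟨d, hdT, hdn⟩ := Nat.find_spec hPex
  have hmin : ∀ d' ∈ T, n₀ ≤ S.lH S.R d' := by
    intro d' hd'
    exact Nat.find_min' hPex ⟨d', hd', rfl⟩
  obtain ⟨hd1, hd2⟩ := S.W_maps (hTW d hdT)
  -- condition on J
  have cond1 : ∀ α ∈ J, d α ∈ S.pos := by
    intro α hα
    by_contra hneg
    obtain ⟨hαR, hαp⟩ := hJRp α hα
    have hdαR : d α ∈ S.R := hd1 α hαR
    have hdαn : d α ∈ S.neg := (S.pos_or_neg hdαR).resolve_left hneg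
    have hdesc := S.descent d hd1 hαR hαp hdαn
    have hsJ : rsRefl V α ∈ weylGroupOf J :=
      Subgroup.subset_closure ⟨α, hα, rfl⟩
    obtain ⟨h, hh, u, hu, rfl⟩ := hdT
    have hmem : (h * w * u) * rsRefl V α ∈ T :=
      ⟨h, hh, u * rsRefl V α, mul_mem hu hsJ, by group⟩
    have := hmin _ hmem
    omega
  -- condition on Δ_H
  have cond2 : ∀ β ∈ S.simpleOf RH, d⁻¹ β ∈ S.pos := by
    intro β hβ
    by_contra hneg
    have hβRH : β ∈ RH := hβ.1.1
    have hβR : β ∈ S.R := hRHsub hβRH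
    have hβp : β ∈ S.pos := hβ.1.2
    have hdβR : d⁻¹ β ∈ S.R := hd2 β hβR
    have hdβn : d⁻¹ β ∈ S.neg := (S.pos_or_neg hdβR).resolve_left hneg
    -- descent applied to x = d⁻¹
    have hdesc := S.descent d⁻¹ hd2 hβR hβp hdβn
    -- lH (d⁻¹ * s_β) = lH (s_β * d)
    have hsβW : rsRefl V β ∈ S.W := Subgroup.subset_closure ⟨β, hβR, rfl⟩
    have hsβH : rsRefl V β ∈ weylGroupOf RH := Subgroup.subset_closure ⟨β, hβRH, rfl⟩
    have hprodW : rsRefl V β * d ∈ S.W := mul_mem hsβW (hTW d hdT)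
    obtain ⟨hp1, hp2⟩ := S.W_maps hprodW
    have hinveq : (rsRefl V β * d)⁻¹ = d⁻¹ * rsRefl V β := by
      rw [mul_inv_rev, rsRefl_inv]
    have h1 : S.lH S.R (d⁻¹ * rsRefl V β) = S.lH S.R (rsRefl V β * d) := by
      rw [← hinveq]
      exact S.lH_inv _ hp1 hp2
    have h2 : S.lH S.R d⁻¹ = S.lH S.R d := S.lH_inv d hd1 hd2
    rw [h1, h2] at hdesc
    obtain ⟨h, hh, u, hu, hdeq⟩ := hdT
    have hmem : rsRefl V β * d ∈ T := by
      refine ⟨rsRefl V β * h, mul_mem hsβH hh, u, hu, ?_⟩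
      rw [hdeq]; group
    have := hmin _ hmem
    omega
  exact ⟨d, ⟨hTW d hdT, cond1, cond2⟩, hdT⟩
end
end

section
/- Let a_H ⊆ V be a linear subspace, let x ∈ W satisfy x(a_H) = a_H, and let w ∈ D_{H,J}. Then d_J(x,w) ∈ 𝐷̃_J if and only if w(a_J) ⊆ a_H (i.e. if and only if w ∈ 𝐷̃_{H,J}). -/
noncomputable section

open scoped RealInnerProductSpace

variable (V : Type*) [NormedAddCommGroup V] [InnerProductSpace ℝ V] [FiniteDimensional ℝ V]

variable {V}

variable (V)

/-- for `x ∈ W` with `x(a_H) = a_H` and `w ∈ D_{H,J}`,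
`d_J(x,w) ∈ 𝐷̃_J` iff `w(a_J) ⊆ a_H`. -/
theorem statement7
    (V : Type*) [NormedAddCommGroup V] [InnerProductSpace ℝ V] [FiniteDimensional ℝ V]
    (S : RootSystemData V) (RH : Set V)
    (hRHsub : RH ⊆ S.R) (hRHrefl : ∀ α ∈ RH, ∀ β ∈ RH, rsRefl V α β ∈ RH)
    (J : Set V) (hJ : J ⊆ S.simple) (aH : Submodule ℝ V)
    (x w : V ≃ₗᵢ[ℝ] V) (hx : x ∈ S.W) (hxa : ⇑x '' (aH : Set V) = (aH : Set V))
    (hw : w ∈ S.DHJ RH J)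
    (wJ dJ : V ≃ₗᵢ[ℝ] V) (hwJ : wJ ∈ weylGroupOf J) (hdJ : dJ ∈ S.DJ J)
    (hdec : w⁻¹ * x = wJ * dJ) :
    (dJ ∈ S.DJ J ∧ ⇑dJ⁻¹ '' aJset J ⊆ (aH : Set V)) ↔ ⇑w '' aJset J ⊆ (aH : Set V) := by
  -- wJ fixes aJ pointwise
  have hfix : ∀ v ∈ aJset J, wJ v = v := by
    refine Subgroup.closure_induction ?_ (fun v _ => rfl) ?_ ?_ hwJ
    · rintro g ⟨α, hα, rfl⟩ v hv
      refine Submodule.reflection_mem_subspace_eq_self ?_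
      rw [Submodule.mem_orthogonal_singleton_iff_inner_left, real_inner_comm]
      exact hv α hα
    · intro g h _ _ hg hh v hv
      have : h v = v := hh v hv
      show g (h v) = v
      rw [this]; exact hg v hv
    · intro g _ hg v hv
      have h1 : g v = v := hg v hv
      have : g⁻¹ (g v) = v := g.symm_apply_apply v
      calc g⁻¹ v = g⁻¹ (g v) := by rw [h1]
      _ = v := this
  -- dJ⁻¹ v = x⁻¹ (w v) for v ∈ aJ
  have hkey : ∀ v ∈ aJset J, dJ⁻¹ v = x⁻¹ (w v) := by
    intro v hv
    have hd : dJ = wJ⁻¹ * (w⁻¹ * x) := by rw [hdec]; group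
    have : dJ⁻¹ = x⁻¹ * w * wJ := by rw [hd]; group
    rw [this]
    show x⁻¹ (w (wJ v)) = x⁻¹ (w v)
    rw [hfix v hv]
  have hxmem : ∀ u : V, x⁻¹ u ∈ aH ↔ u ∈ aH := by
    intro u
    constructor
    · intro h
      have : x (x⁻¹ u) ∈ ⇑x '' (aH : Set V) := Set.mem_image_of_mem _ h
      rwa [hxa, show x (x⁻¹ u) = u from x.apply_symm_apply u] at this
    · intro h
      have h' : u ∈ (aH : Set V) := h
      rw [← hxa] at h'
      obtain ⟨y, hy, rfl⟩ := h'
      rwa [show x⁻¹ (x y) = y from x.symm_apply_apply y]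
  constructor
  · rintro ⟨-, h⟩ u ⟨v, hv, rfl⟩
    have := h (Set.mem_image_of_mem _ hv)
    rw [hkey v hv] at this
    exact (hxmem (w v)).1 this
  · intro h
    refine ⟨hdJ, ?_⟩
    rintro u ⟨v, hv, rfl⟩
    rw [hkey v hv]
    exact (hxmem (w v)).2 (h (Set.mem_image_of_mem _ hv))
end
end

section
/- Let w ∈ D_{H,J} and let w_H ∈ W_H satisfy w_H(Δ_{M′(w)}) ⊆ R⁺. Then R_H⁺ ∩ w_H(w(R_J)) = w_H(R_{M′(w)} ∩ R⁺); equivalently, w_H⁻¹(R_H⁺) ∩ w(R_J) = R_{M′(w)} ∩ R⁺. -/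
noncomputable section

open scoped RealInnerProductSpace

variable (V : Type*) [NormedAddCommGroup V] [InnerProductSpace ℝ V] [FiniteDimensional ℝ V]

variable {V}

variable (V)

set_option linter.unusedSectionVars false

section Aux

variable {V : Type*} [NormedAddCommGroup V] [InnerProductSpace ℝ V] [FiniteDimensional ℝ V]

lemma rsRefl_self (α : V) : rsRefl V α α = -α :=
  Submodule.reflection_orthogonalComplement_singleton_eq_neg α

lemma rsRefl_invol (α : V) (x : V) : rsRefl V α (rsRefl V α x) = x := by
  simp [rsRefl, Submodule.reflection_reflection]

lemma weylGroupOf_image {RS : Set V} (hcl : ∀ α ∈ RS, ∀ β ∈ RS, rsRefl V α β ∈ RS)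
    {g : V ≃ₗᵢ[ℝ] V} (hg : g ∈ weylGroupOf RS) : ⇑g '' RS = RS := by
  refine Subgroup.closure_induction (fun x hx => ?_) ?_ ?_ ?_ hg
  · obtain ⟨α, hα, rfl⟩ := hx
    apply Set.Subset.antisymm
    · rintro _ ⟨β, hβ, rfl⟩; exact hcl α hα β hβ
    · intro β hβ
      exact ⟨rsRefl V α β, hcl α hα β hβ, rsRefl_invol α β⟩
  · simp
  · intro x y _ _ hx hy
    rw [LinearIsometryEquiv.coe_mul, Set.image_comp, hy, hx]
  · intro x _ hx
    have := congrArg (Set.image ⇑x⁻¹) hx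
    rw [← Set.image_comp, LinearIsometryEquiv.coe_inv, LinearIsometryEquiv.symm_comp_self,
      Set.image_id] at this
    rw [LinearIsometryEquiv.coe_inv]
    exact this.symm

lemma posFun_pos_of_simpleOf (S : RootSystemData V) (T : Set V)
    (hT : (T ∩ S.pos).Finite) (f : V →ₗ[ℝ] ℝ) (hf : ∀ δ ∈ S.simpleOf T, 0 < f δ) :
    ∀ α ∈ T ∩ S.pos, 0 < f α := by
  suffices H : ∀ n : ℕ, ∀ α ∈ T ∩ S.pos,
      ({γ ∈ T ∩ S.pos | S.posFun γ < S.posFun α}).ncard ≤ n → 0 < f α by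
    intro α hα; exact H _ α hα le_rfl
  intro n
  induction n with
  | zero =>
    intro α hα hcard
    by_cases hdec : ∃ β ∈ T ∩ S.pos, ∃ γ ∈ T ∩ S.pos, α = β + γ
    · exfalso
      obtain ⟨β, hβ, γ, hγ, rfl⟩ := hdec
      have hβmem : β ∈ {γ' ∈ T ∩ S.pos | S.posFun γ' < S.posFun (β + γ)} := by
        refine ⟨hβ, ?_⟩
        have h1 : 0 < S.posFun γ := hγ.2.2
        rw [map_add]; linarith
      have hfin : ({γ' ∈ T ∩ S.pos | S.posFun γ' < S.posFun (β + γ)}).Finite :=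
        hT.subset (fun x hx => hx.1)
      have : 0 < ({γ' ∈ T ∩ S.pos | S.posFun γ' < S.posFun (β + γ)}).ncard :=
        (Set.ncard_pos hfin).2 ⟨β, hβmem⟩
      omega
    · exact hf α ⟨hα, hdec⟩
  | succ n ih =>
    intro α hα hcard
    by_cases hdec : ∃ β ∈ T ∩ S.pos, ∃ γ ∈ T ∩ S.pos, α = β + γ
    · obtain ⟨β, hβ, γ, hγ, rfl⟩ := hdec
      have hfin : ({γ' ∈ T ∩ S.pos | S.posFun γ' < S.posFun (β + γ)}).Finite :=
        hT.subset (fun x hx => hx.1)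
      have hsub : ∀ δ ∈ T ∩ S.pos, (hδβγ : δ = β ∨ δ = γ) →
          {γ' ∈ T ∩ S.pos | S.posFun γ' < S.posFun δ}
            ⊂ {γ' ∈ T ∩ S.pos | S.posFun γ' < S.posFun (β + γ)} := by
        intro δ hδ hδβγ
        have hlt : S.posFun δ < S.posFun (β + γ) := by
          have h1 : 0 < S.posFun β := hβ.2.2
          have h2 : 0 < S.posFun γ := hγ.2.2
          rw [map_add]
          rcases hδβγ with rfl | rfl <;> linarith
        constructor
        · intro x hx; exact ⟨hx.1, lt_trans hx.2 hlt⟩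
        · intro hcon
          have : δ ∈ {γ' ∈ T ∩ S.pos | S.posFun γ' < S.posFun δ} := hcon ⟨hδ, hlt⟩
          exact absurd this.2 (lt_irrefl _)
      have hβ' : 0 < f β := by
        refine ih β hβ ?_
        have := Set.ncard_lt_ncard (hsub β hβ (Or.inl rfl)) hfin
        omega
      have hγ' : 0 < f γ := by
        refine ih γ hγ ?_
        have := Set.ncard_lt_ncard (hsub γ hγ (Or.inr rfl)) hfin
        omega
      rw [map_add]; linarith
    · exact hf α ⟨hα, hdec⟩

end Aux

/-- for `w ∈ D_{H,J}` and `w_H ∈ W_H` with `w_H(Δ_{M′(w)}) ⊆ R⁺`,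
`R_H⁺ ∩ w_H(w(R_J)) = w_H(R_{M′(w)} ∩ R⁺)`, equivalently
`w_H⁻¹(R_H⁺) ∩ w(R_J) = R_{M′(w)} ∩ R⁺`. -/
theorem statement9
    (V : Type*) [NormedAddCommGroup V] [InnerProductSpace ℝ V] [FiniteDimensional ℝ V]
    (S : RootSystemData V) (RH : Set V)
    (hRHsub : RH ⊆ S.R) (hRHrefl : ∀ α ∈ RH, ∀ β ∈ RH, rsRefl V α β ∈ RH)
    (J : Set V) (hJ : J ⊆ S.simple)
    (w wH : V ≃ₗᵢ[ℝ] V) (hw : w ∈ S.DHJ RH J) (hwH : wH ∈ weylGroupOf RH)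
    (hsim : ∀ α ∈ S.simpleOf (S.RMprime RH J w), wH α ∈ S.pos) :
    (RH ∩ S.pos) ∩ (⇑wH '' (⇑w '' S.RJ J)) = ⇑wH '' (S.RMprime RH J w ∩ S.pos) ∧
    (⇑wH⁻¹ '' (RH ∩ S.pos)) ∩ (⇑w '' S.RJ J) = S.RMprime RH J w ∩ S.pos := by
  set M := S.RMprime RH J w with hMdef
  have himg : ⇑wH '' RH = RH := weylGroupOf_image hRHrefl hwH
  have himg' : ⇑wH⁻¹ '' RH = RH := weylGroupOf_image hRHrefl (inv_mem hwH)
  have hmemH : ∀ β, β ∈ RH → wH β ∈ RH := fun β hβ =>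
    himg ▸ Set.mem_image_of_mem _ hβ
  have hmemH' : ∀ β, wH β ∈ RH → β ∈ RH := fun β hβ => by
    have h2 : (⇑wH⁻¹) (wH β) ∈ ⇑wH⁻¹ '' RH := Set.mem_image_of_mem _ hβ
    rw [himg'] at h2
    rwa [LinearIsometryEquiv.coe_inv, LinearIsometryEquiv.symm_apply_apply] at h2
  have hfin : (M ∩ S.pos).Finite := S.finR.subset (fun x hx => hx.2.1)
  have hkey : ∀ α ∈ M ∩ S.pos, 0 < S.posFun (wH α) := by
    have hmain := posFun_pos_of_simpleOf S M hfin
      (S.posFun.comp (wH.toLinearEquiv : V →ₗ[ℝ] V)) (fun δ hδ => (hsim δ hδ).2)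
    intro α hα
    exact hmain α hα
  have hWpos : ∀ α ∈ M ∩ S.pos, wH α ∈ RH ∩ S.pos := fun α hα =>
    ⟨hmemH α hα.1.1, ⟨hRHsub (hmemH α hα.1.1), hkey α hα⟩⟩
  have hinvmem : ∀ x : V, x ∈ ⇑wH⁻¹ '' (RH ∩ S.pos) ↔ wH x ∈ RH ∩ S.pos := by
    intro x
    rw [LinearIsometryEquiv.coe_inv]
    constructor
    · rintro ⟨y, hy, rfl⟩
      rwa [LinearIsometryEquiv.apply_symm_apply]
    · intro hx
      exact ⟨wH x, hx, by simp⟩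
  have hsecond : (⇑wH⁻¹ '' (RH ∩ S.pos)) ∩ (⇑w '' S.RJ J) = M ∩ S.pos := by
    ext β
    rw [Set.mem_inter_iff, hinvmem]
    constructor
    · rintro ⟨hpos, hβJ⟩
      have hβRH : β ∈ RH := hmemH' β hpos.1
      have hβM : β ∈ M := ⟨hβRH, hβJ⟩
      refine ⟨hβM, ?_⟩
      by_contra hneg
      have hβR : β ∈ S.R := hRHsub hβRH
      have h0 := S.posFun_ne β hβR
      have hlt : S.posFun β < 0 := by
        rcases lt_trichotomy (S.posFun β) 0 with h | h | h
        · exact h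
        · exact absurd h h0
        · exact absurd ⟨hβR, h⟩ hneg
      have hnegRH : -β ∈ RH := by
        have h2 := hRHrefl β hβRH β hβRH
        rwa [rsRefl_self] at h2
      have hnegR : -β ∈ S.R := hRHsub hnegRH
      have hnegJ : -β ∈ ⇑w '' S.RJ J := by
        obtain ⟨γ, ⟨hγR, hγsp⟩, rfl⟩ := hβJ
        refine ⟨-γ, ⟨?_, ?_⟩, by simp⟩
        · have h2 := S.reflect_mem γ hγR γ hγR
          rwa [rsRefl_self] at h2
        · exact Submodule.neg_mem _ hγsp
      have hposneg : 0 < S.posFun (wH (-β)) :=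
        hkey (-β) ⟨⟨hnegRH, hnegJ⟩, ⟨hnegR, by rw [map_neg]; linarith⟩⟩
      have hc : 0 < S.posFun (wH β) := hpos.2.2
      rw [map_neg, map_neg] at hposneg
      linarith
    · rintro ⟨hβM, hβpos⟩
      exact ⟨hWpos β ⟨hβM, hβpos⟩, hβM.2⟩
  refine ⟨?_, hsecond⟩
  have hfirst := congrArg (Set.image ⇑wH) hsecond
  rw [Set.image_inter wH.injective, ← Set.image_comp, LinearIsometryEquiv.coe_inv,
    LinearIsometryEquiv.self_comp_symm, Set.image_id] at hfirst
  exact hfirst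
end
end

section
/- Let ψ and ψ′ be parameter data on the same index set I, with the same assignment of ρ's and ζ's, the same order >ψ (each satisfying condition (P)), and with identical blocks except at one index k, where ζ_k = −1, a_k(ψ) = a_k(ψ′), b_k(ψ′) ≥ a_k(ψ′), and b_k(ψ) = b_k(ψ′) + 2T for some integer T ≥ 0. Then Z_{MW/W}(ψ) = Z_{MW/W}(ψ′). -/
noncomputable section

/-- A parameter datum: a finite family of Jordan blocks `(ρ_i, a_i, b_i)` with signs
`ζ_i ∈ {±1}` (equal to the sign of `a_i − b_i` when `a_i ≠ b_i`), together with a strict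
linear order `>ψ` on the index set satisfying condition (P). Recall the invariants
`A_i = (a_i + b_i)/2 − 1` and `B_i = |a_i − b_i|/2`, so that `A_i > A_j ↔ a_i + b_i > a_j + b_j`
and `B_i > B_j ↔ |a_i − b_i| > |a_j − b_j|`. -/
structure ParamDatum (ρT : Type*) (I : Type*) where
  ρ : I → ρT
  a : I → ℕ
  b : I → ℕ
  ζ : I → ℤ
  a_pos : ∀ i, 0 < a i
  b_pos : ∀ i, 0 < b i
  ζ_pm : ∀ i, ζ i = 1 ∨ ζ i = -1
  ζ_sign_pos : ∀ i, b i < a i → ζ i = 1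
  ζ_sign_neg : ∀ i, a i < b i → ζ i = -1
  gt : I → I → Prop
  gt_irrefl : ∀ i, ¬ gt i i
  gt_trans : ∀ i j k, gt i j → gt j k → gt i k
  gt_total : ∀ i j, gt i j ∨ i = j ∨ gt j i
  condP : ∀ i j, ρ i = ρ j → ζ i = ζ j → a j + b j < a i + b i →
    |(a j : ℤ) - (b j : ℤ)| < |(a i : ℤ) - (b i : ℤ)| → gt i j

namespace ParamDatum

variable {ρT I : Type*} (ψ : ParamDatum ρT I)

/-- The asymmetric condition defining membership of the pair `{i, j}` in `Z_{MW/W}(ψ)`,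
with `i` playing the role of `(ρ, a, b, ζ)` and `j` of `(ρ′, a′, b′, ζ′)`. -/
def pairCond (i j : I) : Prop :=
  ψ.ρ i = ψ.ρ j ∧
  ((Even (ψ.a i) ∧ Even (ψ.b i) ∧ Odd (ψ.a j) ∧ Odd (ψ.b j) ∧
      ((ψ.ζ i = -1 ∧ ((ψ.ζ j = -1 ∧ ψ.gt i j ∧ ψ.a j < ψ.a i) ∨
          (ψ.ζ j = 1 ∧ ψ.a j < ψ.a i))) ∨
       (ψ.ζ i = 1 ∧ ψ.ζ j = 1 ∧
          ((ψ.gt i j ∧ ψ.a i < ψ.a j ∧ ψ.b j < ψ.b i) ∨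
           (ψ.gt j i ∧ ψ.a j < ψ.a i ∧ ψ.b j < ψ.b i))))) ∨
   (Odd (ψ.a i) ∧ Even (ψ.b i) ∧ Even (ψ.a j) ∧ Odd (ψ.b j) ∧
      ((ψ.ζ i = -1 ∧ ((ψ.ζ j = -1 ∧ ψ.gt i j ∧ ψ.a i < ψ.a j) ∨
          (ψ.ζ j = 1 ∧ ψ.gt i j ∧ ψ.a i < ψ.a j) ∨
          (ψ.ζ j = 1 ∧ ψ.gt j i ∧ ψ.a j < ψ.a i))) ∨
       (ψ.ζ i = 1 ∧ ψ.ζ j = 1 ∧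
          ((ψ.gt i j ∧ ψ.a i < ψ.a j ∧ ψ.b j < ψ.b i) ∨
           (ψ.gt j i ∧ ψ.a j < ψ.a i ∧ ψ.b j < ψ.b i))))))

/-- The symmetric relation: the unordered pair `{i, j}` belongs to `Z_{MW/W}(ψ)`. -/
def ZRel (i j : I) : Prop := ψ.pairCond i j ∨ ψ.pairCond j i

/-- The set `Z_{MW/W}(ψ)` of unordered pairs. -/
def Zmww : Set (Sym2 I) := {p | ∃ i j, p = s(i, j) ∧ ψ.ZRel i j}

/-- `deg_ψ(i) := #{j : {i,j} ∈ Z_{MW/W}(ψ)}`. -/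
def degZ (i : I) : ℕ := Set.ncard {j | ψ.ZRel i j}

end ParamDatum

/-- shrinking `b_k` by `2T` at a single index `k` with `ζ_k = −1`,
`a_k` unchanged, and `b_k′ ≥ a_k′`, does not change `Z_{MW/W}`. -/
theorem statement14 (ρT I : Type*) [Fintype I] (ψ ψ' : ParamDatum ρT I) (k : I) (T : ℕ)
    (hρ : ∀ i, ψ.ρ i = ψ'.ρ i) (hζ : ∀ i, ψ.ζ i = ψ'.ζ i)
    (hgt : ∀ i j, ψ.gt i j ↔ ψ'.gt i j)
    (hab : ∀ i, i ≠ k → ψ.a i = ψ'.a i ∧ ψ.b i = ψ'.b i)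
    (hζk : ψ.ζ k = -1) (hak : ψ.a k = ψ'.a k)
    (hko : ψ'.a k ≤ ψ'.b k) (hbk : ψ.b k = ψ'.b k + 2 * T) :
    ψ.Zmww = ψ'.Zmww := by
  have ha : ∀ i, ψ.a i = ψ'.a i := by
    intro i
    by_cases hik : i = k
    · subst hik; exact hak
    · exact (hab i hik).1
  have he : ∀ i, Even (ψ.b i) ↔ Even (ψ'.b i) := by
    intro i
    by_cases hik : i = k
    · subst hik; rw [hbk, Nat.even_add]; simp
    · rw [(hab i hik).2]
  have ho : ∀ i, Odd (ψ.b i) ↔ Odd (ψ'.b i) := by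
    intro i
    rw [← Nat.not_even_iff_odd, ← Nat.not_even_iff_odd, he i]
  have pc : ∀ i j, ψ.pairCond i j ↔ ψ'.pairCond i j := by
    intro i j
    unfold ParamDatum.pairCond
    simp only [hρ, hζ, ha, hgt, he, ho]
    by_cases hik : i = k
    · subst hik
      have hk' : ψ'.ζ i = -1 := (hζ i) ▸ hζk
      simp [hk']
    · by_cases hjk : j = k
      · subst hjk
        have hk' : ψ'.ζ j = -1 := (hζ j) ▸ hζk
        have hbi : ψ.b i = ψ'.b i := (hab i hik).2
        simp [hk', hbi]
      · rw [(hab i hik).2, (hab j hjk).2]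
  have zr : ∀ i j, ψ.ZRel i j ↔ ψ'.ZRel i j := by
    intro i j
    unfold ParamDatum.ZRel
    rw [pc i j, pc j i]
  ext p
  simp only [ParamDatum.Zmww, Set.mem_setOf_eq]
  constructor
  · rintro ⟨i, j, rfl, h⟩; exact ⟨i, j, rfl, (zr i j).mp h⟩
  · rintro ⟨i, j, rfl, h⟩; exact ⟨i, j, rfl, (zr i j).mpr h⟩
end
end

section
/- Let ψ and ψ′ be parameter data on the same index set I, with the same assignment of ρ's and ζ's, the same order >ψ (each satisfying condition (P)), and with identical blocks except at one index k, where ζ_k = +1, b_k(ψ) = b_k(ψ′), a_k(ψ′) ≥ b_k(ψ′), and a_k(ψ) = a_k(ψ′) + 2T for some integer T ≥ 0. Define Z(ψ) as the set of unordered pairs {i,j} ⊆ I with ρ_i = ρ_j such that max(a_i,a_j) and max(b_i,b_j) are even while min(a_i,a_j) and min(b_i,b_j) are odd. Then |Z_{MW/W}(ψ)| + |Z_{MW/W}(ψ′)| ≡ |Z(ψ)| + |Z(ψ′)| (mod 2). -/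
noncomputable section

/-- The set `Z(ψ)`: unordered pairs `{i,j}` with `ρ_i = ρ_j` such that `max(a_i,a_j)` and
`max(b_i,b_j)` are even while `min(a_i,a_j)` and `min(b_i,b_j)` are odd. -/
def ParamDatum.Zplain {ρT I : Type*} (ψ : ParamDatum ρT I) : Set (Sym2 I) :=
  {p | ∃ i j, p = s(i, j) ∧ ψ.ρ i = ψ.ρ j ∧
    Even (max (ψ.a i) (ψ.a j)) ∧ Even (max (ψ.b i) (ψ.b j)) ∧
    Odd (min (ψ.a i) (ψ.a j)) ∧ Odd (min (ψ.b i) (ψ.b j))}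

section Aux

namespace ParamDatum

variable {ρT I : Type*}

/-- The symmetric predicate underlying `Zplain`. -/
def plainRel (ψ : ParamDatum ρT I) (i j : I) : Prop :=
  ψ.ρ i = ψ.ρ j ∧ Even (max (ψ.a i) (ψ.a j)) ∧ Even (max (ψ.b i) (ψ.b j)) ∧
    Odd (min (ψ.a i) (ψ.a j)) ∧ Odd (min (ψ.b i) (ψ.b j))

lemma plainRel_symm (ψ : ParamDatum ρT I) (i j : I) : ψ.plainRel i j ↔ ψ.plainRel j i := by
  unfold plainRel
  rw [eq_comm, max_comm (ψ.a i), max_comm (ψ.b i), min_comm (ψ.a i), min_comm (ψ.b i)]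

lemma mem_Zmww (ψ : ParamDatum ρT I) (x y : I) : s(x, y) ∈ ψ.Zmww ↔ ψ.ZRel x y := by
  constructor
  · rintro ⟨i, j, hp, h⟩
    rw [Sym2.eq_iff] at hp
    rcases hp with ⟨rfl, rfl⟩ | ⟨rfl, rfl⟩
    · exact h
    · exact Or.symm h
  · intro h; exact ⟨x, y, rfl, h⟩

lemma mem_Zplain (ψ : ParamDatum ρT I) (x y : I) : s(x, y) ∈ ψ.Zplain ↔ ψ.plainRel x y := by
  constructor
  · rintro ⟨i, j, hp, h⟩
    rw [Sym2.eq_iff] at hp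
    rcases hp with ⟨rfl, rfl⟩ | ⟨rfl, rfl⟩
    · exact h
    · exact (ψ.plainRel_symm _ _).mp h
  · intro h; exact ⟨x, y, rfl, h⟩

lemma zrel_irrefl (ψ : ParamDatum ρT I) (i : I) : ¬ ψ.ZRel i i := by
  unfold ZRel pairCond
  rintro (⟨-, (⟨h1, -, h2, -⟩ | ⟨h1, -, h2, -⟩)⟩ | ⟨-, (⟨h1, -, h2, -⟩ | ⟨h1, -, h2, -⟩)⟩) <;>
    simp only [Nat.even_iff, Nat.odd_iff] at h1 h2 <;> omega

lemma plainRel_irrefl (ψ : ParamDatum ρT I) (i : I) : ¬ ψ.plainRel i i := by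
  rintro ⟨-, h1, -, h2, -⟩
  simp only [Nat.even_iff, Nat.odd_iff] at h1 h2
  omega

end ParamDatum

/-- Parity of a sum of cardinalities via the symmetric difference. -/
lemma ncard_add_ncard_modEq_symmDiff {α : Type*} (A B : Set α) (hA : A.Finite) (hB : B.Finite) :
    A.ncard + B.ncard ≡ (symmDiff A B).ncard [MOD 2] := by
  have h1 : (A ∪ B).ncard + (A ∩ B).ncard = A.ncard + B.ncard :=
    Set.ncard_union_add_ncard_inter A B hA hB
  have h2 : symmDiff A B = (A ∪ B) \ (A ∩ B) := symmDiff_eq_sup_sdiff_inf A B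
  have h3 : ((A ∪ B) \ (A ∩ B)).ncard + (A ∩ B).ncard = (A ∪ B).ncard :=
    Set.ncard_diff_add_ncard_of_subset
      ((Set.inter_subset_left).trans Set.subset_union_left) (hA.union hB)
  rw [h2]
  unfold Nat.ModEq
  omega

end Aux

set_option maxHeartbeats 2000000 in
/-- shrinking `a_k` by `2T` at a single index `k` with `ζ_k = +1`,
`b_k` unchanged, and `a_k′ ≥ b_k′`, changes `|Z_{MW/W}|` by the same parity as `|Z|`. -/
theorem statement15 (ρT I : Type*) [Fintype I] (ψ ψ' : ParamDatum ρT I) (k : I) (T : ℕ)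
    (hρ : ∀ i, ψ.ρ i = ψ'.ρ i) (hζ : ∀ i, ψ.ζ i = ψ'.ζ i)
    (hgt : ∀ i j, ψ.gt i j ↔ ψ'.gt i j)
    (hab : ∀ i, i ≠ k → ψ.a i = ψ'.a i ∧ ψ.b i = ψ'.b i)
    (hζk : ψ.ζ k = 1) (hbk : ψ.b k = ψ'.b k)
    (hko : ψ'.b k ≤ ψ'.a k) (hak : ψ.a k = ψ'.a k + 2 * T) :
    ψ.Zmww.ncard + ψ'.Zmww.ncard ≡ ψ.Zplain.ncard + ψ'.Zplain.ncard [MOD 2] := by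
  classical
  -- pointwise comparison for pairs not involving k
  have base : ∀ x y : I, x ≠ k → y ≠ k →
      (ψ.ZRel x y ↔ ψ'.ZRel x y) ∧ (ψ.plainRel x y ↔ ψ'.plainRel x y) := by
    intro x y hx hy
    unfold ParamDatum.ZRel ParamDatum.pairCond ParamDatum.plainRel
    simp only [hρ, hζ, hgt, (hab x hx).1, (hab x hx).2, (hab y hy).1, (hab y hy).2]
    exact ⟨trivial, trivial⟩
  -- the main computation for pairs {k, j}, j ≠ k
  have main : ∀ j : I, j ≠ k →
      (Xor' (ψ.ZRel k j) (ψ'.ZRel k j) ↔ Xor' (ψ.plainRel k j) (ψ'.plainRel k j)) := by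
    intro j hj
    have hζk' : ψ'.ζ k = 1 := (hζ k).symm.trans hζk
    by_cases hρkj : ψ'.ρ k = ψ'.ρ j
    · have hρjk : ψ'.ρ j = ψ'.ρ k := hρkj.symm
      have haj := (hab j hj).1
      have hbj := (hab j hj).2
      -- sign facts
      have hbka : ψ.b k ≤ ψ.a k := by omega
      rcases ψ.ζ_pm j with h1 | h1
      all_goals
        first
        | (have h1' : ψ'.ζ j = 1 := (hζ j).symm.trans h1
           have hsj : ψ.b j ≤ ψ.a j := by
             by_contra hc
             have := ψ.ζ_sign_neg j (by omega)
             rw [h1] at this; norm_num at this)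
        | (have h1' : ψ'.ζ j = -1 := (hζ j).symm.trans h1
           have hsj : ψ.a j ≤ ψ.b j := by
             by_contra hc
             have := ψ.ζ_sign_pos j (by omega)
             rw [h1] at this; norm_num at this)
      all_goals
        rcases ψ.gt_total k j with hG | heq | hG'
      all_goals
        try exact absurd heq.symm hj
      all_goals
        first
        | (have hnG : ¬ ψ.gt j k := fun h => ψ.gt_irrefl k (ψ.gt_trans k j k hG h)
           unfold ParamDatum.ZRel ParamDatum.pairCond ParamDatum.plainRel Xor' Xor
           simp only [hρ, ← hgt, hρkj, hζk, hζk', h1, h1', haj, hbj, hbk, hG, hnG]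
           have hm : ψ.a k % 2 = ψ'.a k % 2 := by omega
           rcases Nat.even_or_odd (ψ'.a k) with e1 | e1 <;>
             rcases Nat.even_or_odd (ψ'.b k) with e2 | e2 <;>
             rcases Nat.even_or_odd (ψ'.a j) with e3 | e3 <;>
             rcases Nat.even_or_odd (ψ'.b j) with e4 | e4 <;>
             simp only [Nat.even_iff, Nat.odd_iff] at e1 e2 e3 e4 <;>
             simp [Nat.even_iff, Nat.odd_iff, hm, e1, e2, e3, e4] <;> omega)
        | (have hnG : ¬ ψ.gt k j := fun h => ψ.gt_irrefl k (ψ.gt_trans k j k h hG')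
           unfold ParamDatum.ZRel ParamDatum.pairCond ParamDatum.plainRel Xor' Xor
           simp only [hρ, ← hgt, hρkj, hζk, hζk', h1, h1', haj, hbj, hbk, hG', hnG]
           have hm : ψ.a k % 2 = ψ'.a k % 2 := by omega
           rcases Nat.even_or_odd (ψ'.a k) with e1 | e1 <;>
             rcases Nat.even_or_odd (ψ'.b k) with e2 | e2 <;>
             rcases Nat.even_or_odd (ψ'.a j) with e3 | e3 <;>
             rcases Nat.even_or_odd (ψ'.b j) with e4 | e4 <;>
             simp only [Nat.even_iff, Nat.odd_iff] at e1 e2 e3 e4 <;>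
             simp [Nat.even_iff, Nat.odd_iff, hm, e1, e2, e3, e4] <;> omega)
    · -- different ρ's: everything is false
      unfold ParamDatum.ZRel ParamDatum.pairCond ParamDatum.plainRel Xor'
      have hρjk : ¬ ψ'.ρ j = ψ'.ρ k := fun h => hρkj h.symm
      simp only [hρ, hρkj, hρjk, false_and, or_self, not_false_eq_true, and_true, and_false,
        false_or, or_false]
  -- combine into the pointwise statement for all pairs
  have key : ∀ x y : I,
      (Xor' (ψ.ZRel x y) (ψ'.ZRel x y) ↔ Xor' (ψ.plainRel x y) (ψ'.plainRel x y)) := by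
    intro x y
    by_cases hx : x = k
    · rw [hx]
      by_cases hy : y = k
      · rw [hy]
        unfold Xor'
        simp [ψ.zrel_irrefl, ψ'.zrel_irrefl, ψ.plainRel_irrefl, ψ'.plainRel_irrefl]
      · exact main y hy
    · by_cases hy : y = k
      · rw [hy]
        have hz : ∀ φ : ParamDatum ρT I, φ.ZRel x k ↔ φ.ZRel k x := fun φ => or_comm
        rw [hz ψ, hz ψ', ψ.plainRel_symm x k, ψ'.plainRel_symm x k]
        exact main x hx
      · have h := base x y hx hy
        rw [h.1, h.2]
        unfold Xor' Xor
        tauto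
  -- symmetric differences coincide
  have hsd : symmDiff ψ.Zmww ψ'.Zmww = symmDiff ψ.Zplain ψ'.Zplain := by
    ext p
    induction p using Sym2.ind with
    | _ x y =>
      rw [Set.mem_symmDiff, Set.mem_symmDiff, ψ.mem_Zmww, ψ'.mem_Zmww, ψ.mem_Zplain,
        ψ'.mem_Zplain]
      have h := key x y
      unfold Xor' at h
      tauto
  -- finiteness
  have hfin : ∀ (φ : ParamDatum ρT I), φ.Zmww.Finite ∧ φ.Zplain.Finite := fun φ =>
    ⟨Set.toFinite _, Set.toFinite _⟩
  have c1 := ncard_add_ncard_modEq_symmDiff ψ.Zmww ψ'.Zmww (hfin ψ).1 (hfin ψ').1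
  have c2 := ncard_add_ncard_modEq_symmDiff ψ.Zplain ψ'.Zplain (hfin ψ).2 (hfin ψ').2
  rw [hsd] at c1
  exact c1.trans c2.symm
end
end

section
/- Fix a block k = (ρ, a, b) of ψ with ζ_k = ζ and A_k > B_k (i.e. min(a,b) > 1). Let ψ¹ be obtained from ψ by replacing block k with (ρ, a+2ζ, b−2ζ) (invariants (A_k, B_k+2, ζ)), and let ψ² be obtained from ψ by replacing block k with the two blocks (ρ, a+ζ, b−ζ) (invariants (A_k, B_k+1, ζ)) and the block with invariants (B_k, B_k, ζ), namely (ρ, |a−b|+1, 1) if ζ = +1 and (ρ, 1, |a−b|+1) if ζ = −1. Then for every block x ≠ k of ψ (which is also a block of ψ¹ and of ψ²): ε^{M/MW}_ψ(x) = ε^{M/MW}_{ψ²}(x), and, provided A_k ≥ B_k + 2, also ε^{M/MW}_ψ(x) = ε^{M/MW}_{ψ¹}(x). -/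
open scoped Classical

noncomputable section

/-- A finite collection of Jordan blocks `(ρ_i, a_i, b_i)` with signs `ζ_i ∈ {±1}` (equal
to the sign of `a_i − b_i` when `a_i ≠ b_i`). Recall `A_i = (a_i + b_i)/2 − 1` and
`B_i = |a_i − b_i|/2`. -/
structure BlockColl (ρT : Type*) (I : Type*) where
  ρ : I → ρT
  a : I → ℕ
  b : I → ℕ
  ζ : I → ℤ
  a_pos : ∀ i, 0 < a i
  b_pos : ∀ i, 0 < b i
  ζ_pm : ∀ i, ζ i = 1 ∨ ζ i = -1
  ζ_sign_pos : ∀ i, b i < a i → ζ i = 1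
  ζ_sign_neg : ∀ i, a i < b i → ζ i = -1

namespace BlockColl

variable {ρT I : Type*} (ψ : BlockColl ρT I)

/-- Discrete diagonal restriction: for each fixed `ρ`, the intervals `[B_i, A_i]` of the
blocks with `ρ_i = ρ` are pairwise disjoint (`A_i < B_j` or `A_j < B_i`, written with
`2A_i = a_i + b_i − 2` and `2B_i = |a_i − b_i|`). -/
def ddr : Prop := ∀ i j, i ≠ j → ψ.ρ i = ψ.ρ j →
  ((ψ.a i : ℤ) + ψ.b i - 2 < |(ψ.a j : ℤ) - ψ.b j| ∨
    (ψ.a j : ℤ) + ψ.b j - 2 < |(ψ.a i : ℤ) - ψ.b i|)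

/-- `m(x) := #{y : ρ_y = ρ_x, a_y, b_y odd, ζ_y = −1, |a_y − b_y| > |a_x − b_x|}`. -/
def mCount (i : I) : ℕ :=
  Set.ncard {j | ψ.ρ j = ψ.ρ i ∧ Odd (ψ.a j) ∧ Odd (ψ.b j) ∧ ψ.ζ j = -1 ∧
    |(ψ.a i : ℤ) - ψ.b i| < |(ψ.a j : ℤ) - ψ.b j|}

/-- `n(x) := #{y : ρ_y = ρ_x, a_y, b_y odd, |a_y − b_y| < |a_x − b_x|}`. -/
def nCount (i : I) : ℕ :=
  Set.ncard {j | ψ.ρ j = ψ.ρ i ∧ Odd (ψ.a j) ∧ Odd (ψ.b j) ∧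
    |(ψ.a j : ℤ) - ψ.b j| < |(ψ.a i : ℤ) - ψ.b i|}

/-- The sign `ε^{M/MW}_ψ(x)`. -/
def epsMMW (i : I) : ℤ :=
  if Odd (ψ.a i) ∧ Odd (ψ.b i) then
    (if ψ.ζ i = 1 then (-1) ^ ψ.mCount i else (-1) ^ (ψ.mCount i + ψ.nCount i))
  else 1

end BlockColl

lemma ncard_split {α : Type*} [Fintype α] (P : α → Prop) (k : α) :
    {x | P x}.ncard = {x | P x ∧ x ≠ k}.ncard + (if P k then 1 else 0) := by
  by_cases h : P k
  · have he : {x | P x} = insert k {x | P x ∧ x ≠ k} := by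
      ext y; by_cases hy : y = k <;> simp [hy, h]
    rw [he, Set.ncard_insert_of_notMem (by simp) (Set.toFinite _), if_pos h]
  · have he : {x | P x} = {x | P x ∧ x ≠ k} := by
      ext y; by_cases hy : y = k <;> simp [hy, h]
    rw [he, if_neg h]
    omega

lemma ncard_option {α : Type*} [Fintype α] (P : Option α → Prop) :
    {x : Option α | P x}.ncard = {i : α | P (some i)}.ncard + (if P none then 1 else 0) := by
  have himg : {x : Option α | P x ∧ x ≠ none} = some '' {i | P (some i)} := by
    ext y; cases y <;> simp
  calc {x : Option α | P x}.ncard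
      = {x | P x ∧ x ≠ none}.ncard + (if P none then 1 else 0) := ncard_split P none
    _ = _ := by rw [himg, Set.ncard_image_of_injective _ (Option.some_injective α)]

lemma neg_one_pow_congr' {m n : ℕ} (h : m % 2 = n % 2) : ((-1 : ℤ)) ^ m = (-1) ^ n := by
  conv_lhs => rw [← Nat.div_add_mod m 2]
  conv_rhs => rw [← Nat.div_add_mod n 2]
  rw [pow_add, pow_add, pow_mul, pow_mul]
  simp [h]

lemma eps_congr {ρT I J : Type*} (ψ : BlockColl ρT I) (ψ' : BlockColl ρT J) (x : I) (y : J)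
    (ha : ψ.a x = ψ'.a y) (hb : ψ.b x = ψ'.b y) (hz : ψ.ζ x = ψ'.ζ y)
    (hm : ψ.mCount x % 2 = ψ'.mCount y % 2) (hn : ψ.nCount x % 2 = ψ'.nCount y % 2) :
    ψ.epsMMW x = ψ'.epsMMW y := by
  unfold BlockColl.epsMMW
  rw [← ha, ← hb, ← hz]
  split_ifs with h1 h2
  · exact neg_one_pow_congr' hm
  · exact neg_one_pow_congr' (by omega)
  · rfl

lemma count_option_parity {α : Type*} [Fintype α] (P : α → Prop) (Q : Option α → Prop) (k : α)
    (hPQ : ∀ i, i ≠ k → (P i ↔ Q (some i)))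
    (hxor : P k ↔ (Q (some k) ↔ ¬ Q none)) :
    {i | P i}.ncard % 2 = {j | Q j}.ncard % 2 := by
  rw [ncard_split P k, ncard_option Q, ncard_split (fun i => Q (some i)) k]
  have hset : {i | Q (some i) ∧ i ≠ k} = {i | P i ∧ i ≠ k} := by
    ext i
    simp only [Set.mem_setOf_eq]
    exact and_congr_left fun hi => (hPQ i hi).symm
  rw [hset]
  have hx2 : (if P k then 1 else 0 : ℕ) % 2
      = ((if Q (some k) then 1 else 0) + (if Q none then 1 else 0)) % 2 := by
    by_cases p1 : P k <;> by_cases p2 : Q (some k) <;> by_cases p3 : Q none <;>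
      simp_all
  omega

lemma ncard_mod_congr {α : Type*} (P Q : α → Prop) (h : ∀ i, P i ↔ Q i) :
    {i | P i}.ncard % 2 = {i | Q i}.ncard % 2 := by
  have : {i | P i} = {i | Q i} := Set.ext h
  rw [this]

set_option maxHeartbeats 2000000 in
/-- replacing the block `k = (ρ, a, b)` (with `A_k > B_k`) of `ψ` by
`(ρ, a+2ζ, b−2ζ)` (giving `ψ¹`, provided `A_k ≥ B_k + 2`), or by the two blocks
`(ρ, a+ζ, b−ζ)` and the block with invariants `(B_k, B_k, ζ)` (giving `ψ²`), does not
change `ε^{M/MW}` at any block `x ≠ k`. -/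
theorem statement19 (ρT I : Type*) [Fintype I]
    (ψ : BlockColl ρT I) (hddr : ψ.ddr)
    (k : I) (hk : 1 < min (ψ.a k) (ψ.b k))
    (ψ2 : BlockColl ρT (Option I))
    (hρ2 : ∀ i : I, ψ2.ρ (some i) = ψ.ρ i)
    (hζ2 : ∀ i : I, ψ2.ζ (some i) = ψ.ζ i)
    (hab2 : ∀ i : I, i ≠ k → ψ2.a (some i) = ψ.a i ∧ ψ2.b (some i) = ψ.b i)
    (hak2 : (ψ2.a (some k) : ℤ) = ψ.a k + ψ.ζ k)
    (hbk2 : (ψ2.b (some k) : ℤ) = ψ.b k - ψ.ζ k)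
    (hρnone : ψ2.ρ none = ψ.ρ k) (hζnone : ψ2.ζ none = ψ.ζ k)
    (hnone_pos : ψ.ζ k = 1 → (ψ2.a none : ℤ) = |(ψ.a k : ℤ) - ψ.b k| + 1 ∧ ψ2.b none = 1)
    (hnone_neg : ψ.ζ k = -1 → ψ2.a none = 1 ∧ (ψ2.b none : ℤ) = |(ψ.a k : ℤ) - ψ.b k| + 1) :
    (∀ x : I, x ≠ k → ψ.epsMMW x = ψ2.epsMMW (some x)) ∧
    (2 < min (ψ.a k) (ψ.b k) →
      ∀ ψ1 : BlockColl ρT I,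
        (∀ i, ψ1.ρ i = ψ.ρ i) → (∀ i, ψ1.ζ i = ψ.ζ i) →
        (∀ i, i ≠ k → ψ1.a i = ψ.a i ∧ ψ1.b i = ψ.b i) →
        (ψ1.a k : ℤ) = ψ.a k + 2 * ψ.ζ k → (ψ1.b k : ℤ) = ψ.b k - 2 * ψ.ζ k →
        ∀ x : I, x ≠ k → ψ.epsMMW x = ψ1.epsMMW x) := by
  have hka : 1 < ψ.a k := lt_of_lt_of_le hk (min_le_left _ _)
  have hkb : 1 < ψ.b k := lt_of_lt_of_le hk (min_le_right _ _)
  have hz := ψ.ζ_pm k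
  have hsgn1 : ψ.ζ k = 1 → ψ.b k ≤ ψ.a k := by
    intro h; by_contra hc
    have h2 := ψ.ζ_sign_neg k (by omega)
    omega
  have hsgn2 : ψ.ζ k = -1 → ψ.a k ≤ ψ.b k := by
    intro h; by_contra hc
    have h2 := ψ.ζ_sign_pos k (by omega)
    omega
  constructor
  · intro x hx
    obtain ⟨hax, hbx⟩ := hab2 x hx
    refine eps_congr ψ ψ2 x (some x) hax.symm hbx.symm (hζ2 x).symm ?_ ?_
    · unfold BlockColl.mCount
      refine count_option_parity _ _ k (fun i hi => ?_) ?_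
      · obtain ⟨hai, hbi⟩ := hab2 i hi
        simp only [hρ2, hζ2, hai, hbi, hax, hbx]
      · by_cases hR : ψ.ρ k = ψ.ρ x
        · have h5 := hddr k x (Ne.symm hx) hR
          rw [Int.abs_eq_natAbs, Int.abs_eq_natAbs] at h5
          have h6 := hζ2 k
          have h7 := hζnone
          have h8 := ψ2.a_pos (some k); have h9 := ψ2.b_pos (some k)
          have h10 := ψ2.a_pos none; have h11 := ψ2.b_pos none
          have h12 := ψ.a_pos x; have h13 := ψ.b_pos x
          simp only [hρ2, hρnone, hR, hax, hbx, Nat.odd_iff, Int.abs_eq_natAbs,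
            eq_self_iff_true, true_and]
          rcases hz with h | h
          · obtain ⟨hn1, hn2⟩ := hnone_pos h
            rw [Int.abs_eq_natAbs] at hn1
            have hs := hsgn1 h
            rcases h5 with h5 | h5 <;> omega
          · obtain ⟨hn1, hn2⟩ := hnone_neg h
            rw [Int.abs_eq_natAbs] at hn2
            have hs := hsgn2 h
            rcases h5 with h5 | h5 <;> omega
        · simp [hρ2, hρnone, hR]
    · unfold BlockColl.nCount
      refine count_option_parity _ _ k (fun i hi => ?_) ?_
      · obtain ⟨hai, hbi⟩ := hab2 i hi
        simp only [hρ2, hζ2, hai, hbi, hax, hbx]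
      · by_cases hR : ψ.ρ k = ψ.ρ x
        · have h5 := hddr k x (Ne.symm hx) hR
          rw [Int.abs_eq_natAbs, Int.abs_eq_natAbs] at h5
          have h6 := hζ2 k
          have h7 := hζnone
          have h8 := ψ2.a_pos (some k); have h9 := ψ2.b_pos (some k)
          have h10 := ψ2.a_pos none; have h11 := ψ2.b_pos none
          have h12 := ψ.a_pos x; have h13 := ψ.b_pos x
          simp only [hρ2, hρnone, hR, hax, hbx, Nat.odd_iff, Int.abs_eq_natAbs,
            eq_self_iff_true, true_and]
          rcases hz with h | h
          · obtain ⟨hn1, hn2⟩ := hnone_pos h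
            rw [Int.abs_eq_natAbs] at hn1
            have hs := hsgn1 h
            rcases h5 with h5 | h5 <;> omega
          · obtain ⟨hn1, hn2⟩ := hnone_neg h
            rw [Int.abs_eq_natAbs] at hn2
            have hs := hsgn2 h
            rcases h5 with h5 | h5 <;> omega
        · simp [hρ2, hρnone, hR]
  · intro hk2 ψ1 hρ1 hζ1 hab1 hak1 hbk1 x hx
    obtain ⟨hax, hbx⟩ := hab1 x hx
    have hka2 : 2 < ψ.a k := lt_of_lt_of_le hk2 (min_le_left _ _)
    have hkb2 : 2 < ψ.b k := lt_of_lt_of_le hk2 (min_le_right _ _)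
    refine eps_congr ψ ψ1 x x hax.symm hbx.symm (hζ1 x).symm ?_ ?_
    · unfold BlockColl.mCount
      refine ncard_mod_congr _ _ fun j => ?_
      by_cases hj : j = k
      · subst hj
        by_cases hR : ψ.ρ j = ψ.ρ x
        · have h5 := hddr j x (Ne.symm hx) hR
          rw [Int.abs_eq_natAbs, Int.abs_eq_natAbs] at h5
          have h6 := hζ1 j
          have h8 := ψ1.a_pos j; have h9 := ψ1.b_pos j
          have h12 := ψ.a_pos x; have h13 := ψ.b_pos x
          simp only [hρ1, hR, hax, hbx, Nat.odd_iff, Int.abs_eq_natAbs,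
            eq_self_iff_true, true_and]
          rcases hz with h | h
          · have hs := hsgn1 h
            rcases h5 with h5 | h5 <;> omega
          · have hs := hsgn2 h
            rcases h5 with h5 | h5 <;> omega
        · simp [hρ1, hR]
      · obtain ⟨haj, hbj⟩ := hab1 j hj
        simp only [hρ1, hζ1, haj, hbj, hax, hbx]
    · unfold BlockColl.nCount
      refine ncard_mod_congr _ _ fun j => ?_
      by_cases hj : j = k
      · subst hj
        by_cases hR : ψ.ρ j = ψ.ρ x
        · have h5 := hddr j x (Ne.symm hx) hR
          rw [Int.abs_eq_natAbs, Int.abs_eq_natAbs] at h5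
          have h6 := hζ1 j
          have h8 := ψ1.a_pos j; have h9 := ψ1.b_pos j
          have h12 := ψ.a_pos x; have h13 := ψ.b_pos x
          simp only [hρ1, hR, hax, hbx, Nat.odd_iff, Int.abs_eq_natAbs,
            eq_self_iff_true, true_and]
          rcases hz with h | h
          · have hs := hsgn1 h
            rcases h5 with h5 | h5 <;> omega
          · have hs := hsgn2 h
            rcases h5 with h5 | h5 <;> omega
        · simp [hρ1, hR]
      · obtain ⟨haj, hbj⟩ := hab1 j hj
        simp only [hρ1, hζ1, haj, hbj, hax, hbx]
end
end
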